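/- Let A be a positive invertible operator on H, T ∈ B(H), and f(z) = Σ_{n≥0} c_n z^n a power series with complex coefficients converging on D(0,R), R > 0. If ‖T‖_A < R, then r_A(f(T)) ≤ Σ_{n≥0} |c_n| (r_A(T))^n = f_c(r_A(T)). -/

import Mathlib

open ContinuousLinearMap

variable {H : Type*} [NormedAddCommGroup H] [InnerProductSpace ℂ H] [CompleteSpace H]

/-- The seminorm `‖x‖_A = ‖A^{1/2} x‖ = √⟨Ax, x⟩` induced by a positive operator `A`. -/
noncomputable def anorm (A : H →L[ℂ] H) (x : H) : ℝ :=
  Real.sqrt (A.reApplyInnerSelf x)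

/-- `T` is `A`-bounded: `‖Tx‖_A ≤ c ‖x‖_A` for some `c > 0`. -/
def ABounded (A T : H →L[ℂ] H) : Prop :=
  ∃ c : ℝ, 0 < c ∧ ∀ x : H, anorm A (T x) ≤ c * anorm A x

/-- The operator seminorm `‖T‖_A`: the least `c ≥ 0` with `‖Tx‖_A ≤ c ‖x‖_A` for all `x`. -/
noncomputable def aNorm (A T : H →L[ℂ] H) : ℝ :=
  sInf {c : ℝ | 0 ≤ c ∧ ∀ x : H, anorm A (T x) ≤ c * anorm A x}

/-- The `A`-spectral radius `r_A(T) = inf_{n ≥ 1} ‖T^n‖_A^{1/n}`. -/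
noncomputable def aSpecRad (A T : H →L[ℂ] H) : ℝ :=
  ⨅ n : ℕ+, aNorm A (T ^ (n : ℕ)) ^ ((n : ℝ)⁻¹)

/-- The `A`-numerical radius `ω_A(T) = sup {|⟨ATx, x⟩| : ‖x‖_A = 1}`. -/
noncomputable def aNumRad (A T : H →L[ℂ] H) : ℝ :=
  sSup {c : ℝ | ∃ x : H, anorm A x = 1 ∧ c = ‖(inner ℂ (A (T x)) x : ℂ)‖}

set_option synthInstance.maxHeartbeats 1000000
set_option maxHeartbeats 1000000

open scoped InnerProductSpace

lemma aNorm_nonneg (A T : H →L[ℂ] H) : 0 ≤ aNorm A T :=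
  Real.sInf_nonneg fun _ hc => hc.1

lemma sqrt_mul_self' (A : H →L[ℂ] H) (hA : A.IsPositive) : CFC.sqrt A * CFC.sqrt A = A := by
  have := CFC.sq_sqrt A ((ContinuousLinearMap.nonneg_iff_isPositive A).mpr hA)
  rwa [sq] at this

lemma sqrt_isPositive' (A : H →L[ℂ] H) : (CFC.sqrt A).IsPositive :=
  (ContinuousLinearMap.nonneg_iff_isPositive _).mp (CFC.sqrt_nonneg (a := A))

lemma sqrt_isUnit (A : H →L[ℂ] H) (hA : A.IsPositive) (hAinv : IsUnit A) :
    IsUnit (CFC.sqrt A) := by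
  obtain ⟨u, hu⟩ := hAinv
  set B := CFC.sqrt A with hB
  have hBB : B * B = A := sqrt_mul_self' A hA
  have h1 : B * (B * ↑u⁻¹) = 1 := by rw [← mul_assoc, hBB, ← hu, Units.mul_inv]
  have h2 : (↑u⁻¹ * B) * B = 1 := by rw [mul_assoc, hBB, ← hu, Units.inv_mul]
  have heq : (↑u⁻¹ * B : H →L[ℂ] H) = B * ↑u⁻¹ := by
    calc (↑u⁻¹ * B : H →L[ℂ] H) = (↑u⁻¹ * B) * (B * (B * ↑u⁻¹)) := by rw [h1, mul_one]
    _ = ((↑u⁻¹ * B) * B) * (B * ↑u⁻¹) := by noncomm_ring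
    _ = B * ↑u⁻¹ := by rw [h2, one_mul]
  exact ⟨⟨B, B * ↑u⁻¹, h1, by rw [← heq]; exact h2⟩, rfl⟩

lemma anorm_eq_sqrt_apply (A : H →L[ℂ] H) (hA : A.IsPositive) (x : H) :
    anorm A x = ‖CFC.sqrt A x‖ := by
  have hBB : CFC.sqrt A * CFC.sqrt A = A := sqrt_mul_self' A hA
  have hsa : ContinuousLinearMap.adjoint (CFC.sqrt A) = CFC.sqrt A :=
    (sqrt_isPositive' A).isSelfAdjoint
  have key : A.reApplyInnerSelf x = ‖CFC.sqrt A x‖ ^ 2 := by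
    rw [ContinuousLinearMap.reApplyInnerSelf_apply]
    have h1 : A x = CFC.sqrt A (CFC.sqrt A x) := by
      conv_lhs => rw [← hBB]
      rfl
    rw [h1]
    have h2 := ContinuousLinearMap.adjoint_inner_left (CFC.sqrt A) x (CFC.sqrt A x)
    rw [hsa] at h2
    rw [h2, inner_self_eq_norm_sq (𝕜 := ℂ)]
  rw [anorm, key, Real.sqrt_sq (norm_nonneg _)]

section conj
variable (A B Binv : H →L[ℂ] H)

lemma aNorm_eq_conj (h1 : B * Binv = 1) (h2 : Binv * B = 1)
    (hanorm : ∀ x, anorm A x = ‖B x‖) (X : H →L[ℂ] H) :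
    aNorm A X = ‖B * X * Binv‖ := by
  set S := B * X * Binv with hS
  have hBinvB : ∀ x : H, Binv (B x) = x := fun x => by
    have := ContinuousLinearMap.ext_iff.mp h2 x
    simpa [ContinuousLinearMap.mul_apply] using this
  have hBBinv : ∀ x : H, B (Binv x) = x := fun x => by
    have := ContinuousLinearMap.ext_iff.mp h1 x
    simpa [ContinuousLinearMap.mul_apply] using this
  have hmem : ‖S‖ ∈ {c : ℝ | 0 ≤ c ∧ ∀ x : H, anorm A (X x) ≤ c * anorm A x} := by
    refine ⟨norm_nonneg _, fun x => ?_⟩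
    have hx : B (X x) = S (B x) := by
      simp [hS, ContinuousLinearMap.mul_apply, hBinvB]
    calc anorm A (X x) = ‖B (X x)‖ := hanorm _
      _ = ‖S (B x)‖ := by rw [hx]
      _ ≤ ‖S‖ * ‖B x‖ := S.le_opNorm _
      _ = ‖S‖ * anorm A x := by rw [hanorm]
  refine le_antisymm (csInf_le ⟨0, fun c hc => hc.1⟩ hmem) (le_csInf ⟨_, hmem⟩ ?_)
  rintro c ⟨hc0, hc⟩
  refine ContinuousLinearMap.opNorm_le_bound S hc0 fun y => ?_
  have hy : S y = B (X (Binv y)) := by simp [hS, ContinuousLinearMap.mul_apply]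
  calc ‖S y‖ = anorm A (X (Binv y)) := by rw [hy, hanorm]
    _ ≤ c * anorm A (Binv y) := hc _
    _ = c * ‖y‖ := by rw [hanorm, hBBinv]

lemma conj_pow' (h1 : B * Binv = 1) (h2 : Binv * B = 1) (X : H →L[ℂ] H) :
    ∀ n : ℕ, B * X ^ n * Binv = (B * X * Binv) ^ n := by
  intro n
  induction n with
  | zero => simpa using h1
  | succ n ih =>
    rw [pow_succ, pow_succ, ← ih]
    calc B * (X ^ n * X) * Binv = (B * X ^ n) * (Binv * B) * (X * Binv) := by
          rw [h2]; noncomm_ring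
      _ = B * X ^ n * Binv * (B * X * Binv) := by noncomm_ring

lemma conj_hasSum (h1 : B * Binv = 1) (h2 : Binv * B = 1) (c : ℕ → ℂ)
    (T fT : H →L[ℂ] H) (hfT : HasSum (fun n : ℕ => c n • T ^ n) fT) :
    HasSum (fun n : ℕ => c n • (B * T * Binv) ^ n) (B * fT * Binv) := by
  have cont : Continuous (fun X : H →L[ℂ] H => B * X * Binv) :=
    (continuous_const.mul continuous_id).mul continuous_const
  have hmap := hfT.map
    (AddMonoidHom.mk' (fun X : H →L[ℂ] H => B * X * Binv)
      (fun X Y => by noncomm_ring)) cont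
  have heq : (fun n : ℕ => c n • (B * T * Binv) ^ n)
      = (fun X : H →L[ℂ] H => B * X * Binv) ∘ (fun n : ℕ => c n • T ^ n) := by
    funext n
    show c n • (B * T * Binv) ^ n = B * (c n • T ^ n) * Binv
    rw [mul_smul_comm, smul_mul_assoc, conj_pow' B Binv h1 h2]
  rw [heq]
  exact hmap

end conj

lemma summable_abs_coeff (c : ℕ → ℂ) (R : ℝ)
    (hconv : ∀ z : ℂ, ‖z‖ < R → Summable fun n : ℕ => c n * z ^ n)
    (x : ℝ) (hx0 : 0 ≤ x) (hxR : x < R) :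
    Summable fun n : ℕ => ‖c n‖ * x ^ n := by
  set x' : ℝ := (x + R) / 2 with hx'
  have hxx' : x < x' := by simp only [hx']; linarith
  have hx'R : x' < R := by simp only [hx']; linarith
  have hx'0 : 0 < x' := lt_of_le_of_lt hx0 hxx'
  have hs := hconv (x' : ℂ) (by simpa [Complex.norm_real, abs_of_pos hx'0] using hx'R)
  have htend : Filter.Tendsto (fun n => ‖c n * (x' : ℂ) ^ n‖) Filter.atTop (nhds 0) := by
    simpa using hs.tendsto_atTop_zero.norm
  obtain ⟨M, hM⟩ := htend.bddAbove_range
  have hMb : ∀ n : ℕ, ‖c n‖ * x' ^ n ≤ M := by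
    intro n
    have := hM (Set.mem_range_self n)
    simpa [norm_mul, norm_pow, Complex.norm_real, abs_of_pos hx'0] using this
  have hq0 : 0 ≤ x / x' := div_nonneg hx0 hx'0.le
  have hq1 : x / x' < 1 := (div_lt_one hx'0).mpr hxx'
  refine Summable.of_nonneg_of_le (fun n => by positivity) (fun n => ?_)
    ((summable_geometric_of_lt_one hq0 hq1).mul_left M)
  calc ‖c n‖ * x ^ n = (‖c n‖ * x' ^ n) * (x / x') ^ n := by
        rw [mul_assoc, ← mul_pow, show x' * (x / x') = x from by field_simp]
    _ ≤ M * (x / x') ^ n :=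
        mul_le_mul_of_nonneg_right (hMb n) (pow_nonneg hq0 n)

/-- if `A` is positive and invertible, `f(z) = ∑ cₙ zⁿ` converges on
`D(0, R)`, `‖T‖_A < R`, and `f(T) = ∑ cₙ Tⁿ`, then
`r_A(f(T)) ≤ ∑ |cₙ| (r_A(T))ⁿ = f_c(r_A(T))`. -/
theorem stmt19 (A T fT : H →L[ℂ] H) (hA : A.IsPositive) (hAinv : IsUnit A)
    (c : ℕ → ℂ) (R : ℝ) (hR : 0 < R)
    (hconv : ∀ z : ℂ, ‖z‖ < R → Summable fun n : ℕ => c n * z ^ n)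
    (hT : aNorm A T < R)
    (hfT : HasSum (fun n : ℕ => c n • T ^ n) fT) :
    aSpecRad A fT ≤ ∑' n : ℕ, ‖c n‖ * (aSpecRad A T) ^ n := by
  classical
  have hbdd : ∀ X : H →L[ℂ] H,
      BddBelow (Set.range fun n : ℕ+ => aNorm A (X ^ (n : ℕ)) ^ ((n : ℝ)⁻¹)) := fun X =>
    ⟨0, by rintro y ⟨n, rfl⟩; exact Real.rpow_nonneg (aNorm_nonneg A _) _⟩
  have hspec_nonneg : ∀ X : H →L[ℂ] H, 0 ≤ aSpecRad A X := fun X =>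
    le_ciInf fun n => Real.rpow_nonneg (aNorm_nonneg A _) _
  rcases subsingleton_or_nontrivial H with hH | hH
  · -- trivial Hilbert space
    have hz : ∀ y : H, anorm A y = 0 := fun y => by
      rw [show y = 0 from Subsingleton.elim y 0]
      simp [anorm, ContinuousLinearMap.reApplyInnerSelf_apply]
    have haN : ∀ X : H →L[ℂ] H, aNorm A X = 0 := fun X => by
      refine le_antisymm (csInf_le ⟨0, fun d hd => hd.1⟩ ⟨le_refl 0, fun x => ?_⟩)
        (aNorm_nonneg A X)
      rw [hz, hz]; simp
    have h0 : aSpecRad A fT = 0 := by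
      have : ∀ n : ℕ+, aNorm A (fT ^ (n : ℕ)) ^ ((n : ℝ)⁻¹) = 0 := fun n => by
        rw [haN, Real.zero_rpow]
        exact inv_ne_zero (by exact_mod_cast n.pos.ne')
      simp only [aSpecRad, this]
      exact ciInf_const
    rw [h0]
    exact tsum_nonneg fun n =>
      mul_nonneg (norm_nonneg _) (pow_nonneg (hspec_nonneg T) n)
  · -- nontrivial Hilbert space
    obtain ⟨u, hu⟩ := sqrt_isUnit A hA hAinv
    set B : H →L[ℂ] H := CFC.sqrt A with hBdef
    set Binv : H →L[ℂ] H := ↑u⁻¹ with hBinvdef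
    have h1 : B * Binv = 1 := by rw [← hu]; exact u.mul_inv
    have h2 : Binv * B = 1 := by rw [← hu]; exact u.inv_mul
    have hanorm : ∀ x, anorm A x = ‖B x‖ := anorm_eq_sqrt_apply A hA
    have hN : ∀ X : H →L[ℂ] H, aNorm A X = ‖B * X * Binv‖ := fun X =>
      aNorm_eq_conj A B Binv h1 h2 hanorm X
    set S : H →L[ℂ] H := B * T * Binv with hSdef
    set fS : H →L[ℂ] H := B * fT * Binv with hfSdef
    have hNpow : ∀ n : ℕ, aNorm A (T ^ n) = ‖S ^ n‖ := fun n => by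
      rw [hN, conj_pow' B Binv h1 h2]
    have hNfpow : ∀ n : ℕ, aNorm A (fT ^ n) = ‖fS ^ n‖ := fun n => by
      rw [hN, conj_pow' B Binv h1 h2]
    have hSsum : HasSum (fun n : ℕ => c n • S ^ n) fS :=
      conj_hasSum B Binv h1 h2 c T fT hfT
    letI : NormedCommRing (Algebra.elemental ℂ S) :=
      { (inferInstance : NormedRing (Algebra.elemental ℂ S)) with mul_comm := mul_comm }
    haveI : NormOneClass (Algebra.elemental ℂ S) :=
      ⟨show ‖((1 : Algebra.elemental ℂ S) : H →L[ℂ] H)‖ = 1 by simp⟩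
    have hfSmem : fS ∈ Algebra.elemental ℂ S := by
      refine (Algebra.elemental.isClosed (R := ℂ) S).mem_of_tendsto hSsum.tendsto_sum_nat
        (Filter.Eventually.of_forall fun n => ?_)
      exact sum_mem fun i _ =>
        Subalgebra.smul_mem _ (pow_mem (Algebra.elemental.self_mem ℂ S) i) _
    set S' : Algebra.elemental ℂ S := ⟨S, Algebra.elemental.self_mem ℂ S⟩ with hS'def
    set fS' : Algebra.elemental ℂ S := ⟨fS, hfSmem⟩ with hfS'def
    have hcoe_pow : ∀ (x : Algebra.elemental ℂ S) (n : ℕ),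
        ((x ^ n : Algebra.elemental ℂ S) : H →L[ℂ] H) = (x : H →L[ℂ] H) ^ n :=
      fun x n => SubmonoidClass.coe_pow x n
    have hSsum' : HasSum (fun n : ℕ => c n • S' ^ n) fS' := by
      rw [HasSum]
      rw [(Algebra.elemental.isClosedEmbedding_coe ℂ S).toIsEmbedding.tendsto_nhds_iff]
      have heq : ((↑) : Algebra.elemental ℂ S → H →L[ℂ] H) ∘
          (fun s : Finset ℕ => ∑ i ∈ s, c i • S' ^ i)
          = fun s : Finset ℕ => ∑ i ∈ s, c i • S ^ i := by
        funext s
        push_cast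
        simp [hcoe_pow]
        rfl
      rw [heq]
      exact hSsum
    have hr0 : 0 ≤ aSpecRad A T := hspec_nonneg T
    have hrR : aSpecRad A T < R := by
      refine lt_of_le_of_lt ?_ hT
      have h := ciInf_le (hbdd T) (1 : ℕ+)
      simpa [aSpecRad] using h
    have hsumC : Summable fun n : ℕ => ‖c n‖ * aSpecRad A T ^ n :=
      summable_abs_coeff c R hconv _ hr0 hrR
    -- every spectral value of fS' is bounded by the series
    have hchar : ∀ μ : ℂ, μ ∈ spectrum ℂ fS' →
        ‖μ‖ ≤ ∑' n : ℕ, ‖c n‖ * aSpecRad A T ^ n := by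
      intro μ hμ
      obtain ⟨χ, hχ⟩ := WeakDual.CharacterSpace.mem_spectrum_iff_exists.mp hμ
      set ν : ℂ := χ S' with hνdef
      have hν : ‖ν‖ ≤ aSpecRad A T := by
        refine le_ciInf fun n => ?_
        have hmem : ν ^ (n : ℕ) ∈ spectrum ℂ (S' ^ (n : ℕ)) := by
          rw [hνdef, ← map_pow]
          exact WeakDual.CharacterSpace.apply_mem_spectrum χ _
        have hle : ‖ν ^ (n : ℕ)‖ ≤ ‖S' ^ (n : ℕ)‖ := spectrum.norm_le_norm_of_mem hmem
        have hnorm : ‖S' ^ (n : ℕ)‖ = aNorm A (T ^ (n : ℕ)) := by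
          rw [hNpow]
          show ‖((S' ^ (n : ℕ) : Algebra.elemental ℂ S) : H →L[ℂ] H)‖ = ‖S ^ (n : ℕ)‖
          rw [hcoe_pow]
        have h3 : ‖ν‖ ^ (n : ℕ) ≤ aNorm A (T ^ (n : ℕ)) := by
          rw [← norm_pow]; rw [hnorm] at hle; exact hle
        have hn0 : (0 : ℝ) < ((n : ℕ) : ℝ) := by exact_mod_cast n.pos
        calc ‖ν‖ = (‖ν‖ ^ (n : ℕ)) ^ (((n : ℕ) : ℝ)⁻¹) := by
              rw [← Real.rpow_natCast ‖ν‖ (n : ℕ), ← Real.rpow_mul (norm_nonneg ν),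
                mul_inv_cancel₀ hn0.ne', Real.rpow_one]
          _ ≤ aNorm A (T ^ (n : ℕ)) ^ (((n : ℕ) : ℝ)⁻¹) :=
              Real.rpow_le_rpow (pow_nonneg (norm_nonneg _) _) h3 (inv_nonneg.mpr hn0.le)
      have hsχ : HasSum (fun n : ℕ => c n * ν ^ n) μ := by
        have hmap := hSsum'.map χ (map_continuous χ)
        have heq : (⇑χ ∘ fun n : ℕ => c n • S' ^ n) = fun n : ℕ => c n * ν ^ n := by
          funext n
          simp [Function.comp, map_smul, map_pow, smul_eq_mul, hνdef]
        rw [heq] at hmap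
        rwa [hχ] at hmap
      have hsummν : Summable fun n : ℕ => ‖c n‖ * ‖ν‖ ^ n :=
        summable_abs_coeff c R hconv ‖ν‖ (norm_nonneg ν) (lt_of_le_of_lt hν hrR)
      calc ‖μ‖ = ‖∑' n : ℕ, c n * ν ^ n‖ := by rw [hsχ.tsum_eq]
        _ ≤ ∑' n : ℕ, ‖c n * ν ^ n‖ :=
            norm_tsum_le_tsum_norm (by simpa [norm_mul, norm_pow] using hsummν)
        _ = ∑' n : ℕ, ‖c n‖ * ‖ν‖ ^ n := by simp [norm_mul, norm_pow]
        _ ≤ ∑' n : ℕ, ‖c n‖ * aSpecRad A T ^ n :=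
            Summable.tsum_le_tsum (fun n => mul_le_mul_of_nonneg_left
              (pow_le_pow_left₀ (norm_nonneg _) hν n) (norm_nonneg _)) hsummν hsumC
    have hC0 : 0 ≤ ∑' n : ℕ, ‖c n‖ * aSpecRad A T ^ n :=
      tsum_nonneg fun n => mul_nonneg (norm_nonneg _) (pow_nonneg hr0 n)
    have hsp : spectralRadius ℂ fS' ≤ ENNReal.ofReal (∑' n : ℕ, ‖c n‖ * aSpecRad A T ^ n) := by
      unfold spectralRadius
      refine iSup₂_le fun k hk => ?_
      rw [show ((‖k‖₊ : NNReal) : ENNReal) = ENNReal.ofReal ‖k‖ from (ofReal_norm k).symm]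
      exact ENNReal.ofReal_le_ofReal (hchar k hk)
    have htends := spectrum.pow_norm_pow_one_div_tendsto_nhds_spectralRadius fS'
    have hlhs : ENNReal.ofReal (aSpecRad A fT) ≤ spectralRadius ℂ fS' := by
      refine ge_of_tendsto htends ?_
      filter_upwards [Filter.eventually_ge_atTop 1] with n hn
      refine ENNReal.ofReal_le_ofReal ?_
      have hle : aSpecRad A fT ≤ aNorm A (fT ^ ((⟨n, hn⟩ : ℕ+) : ℕ)) ^
          ((((⟨n, hn⟩ : ℕ+) : ℕ) : ℝ)⁻¹) := ciInf_le (hbdd fT) (⟨n, hn⟩ : ℕ+)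
      have hnorm : aNorm A (fT ^ n) = ‖fS' ^ n‖ := by
        rw [hNfpow,
          show ‖fS' ^ n‖ = ‖((fS' ^ n : Algebra.elemental ℂ S) : H →L[ℂ] H)‖ from rfl,
          hcoe_pow]
      rw [one_div, ← hnorm]
      exact hle
    exact (ENNReal.ofReal_le_ofReal_iff hC0).mp (hlhs.trans hsp)
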